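/- Let η ≥ 2 and (δT,δX) ∈ ℤ×ℕ with δ := δT+η·δX ≥ 0. If q > δ, then the minimum distance of C_η(δT,δX) equals d_η(δT,δX) = (q + [δX = 0])·(q−δ+1), where [δX = 0] equals 1 if δX = 0 and 0 otherwise. -/

import Mathlib

open MvPolynomial

attribute [local instance] Classical.propDecidable

namespace Hirz

/-- Index type for the `(q+1)²` rational points of the Hirzebruch surface. -/
abbrev HIdx (F : Type) := (F × F) ⊕ F ⊕ F ⊕ Unit

variable (F : Type) [Field F] [Fintype F]

/-- The homogeneous coordinates of the rational points of `H_η`. -/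
def pt : HIdx F → Fin 4 → F
  | Sum.inl (a, b) => ![1, a, 1, b]
  | Sum.inr (Sum.inl b) => ![0, 1, 1, b]
  | Sum.inr (Sum.inr (Sum.inl a)) => ![1, a, 0, 1]
  | Sum.inr (Sum.inr (Sum.inr _)) => ![0, 1, 0, 1]

/-- Evaluation of a polynomial at all the rational points. -/
noncomputable def ev (P : MvPolynomial (Fin 4) F) : HIdx F → F :=
  fun i => eval (pt F i) P

/-- `c` is the exponent vector (T1,T2,X1,X2) of a monomial of bidegree `(δT, δX)`. -/
def IsBideg (η : ℕ) (δT : ℤ) (δX : ℕ) (c : Fin 4 → ℕ) : Prop :=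
  (c 0 : ℤ) + (c 1 : ℤ) - (η : ℤ) * (c 2 : ℤ) = δT ∧ c 2 + c 3 = δX

/-- The monomial with exponent vector `c`. -/
noncomputable def mon (c : Fin 4 → ℕ) : MvPolynomial (Fin 4) F :=
  monomial (Finsupp.equivFunOnFinite.symm c) (1 : F)

/-- The set of monomials of bidegree `(δT, δX)`. -/
def MSet (η : ℕ) (δT : ℤ) (δX : ℕ) : Set (MvPolynomial (Fin 4) F) :=
  {P | ∃ c : Fin 4 → ℕ, IsBideg η δT δX c ∧ P = mon F c}

/-- `R(δT,δX)`, the space of homogeneous polynomials of bidegree `(δT,δX)`. -/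
noncomputable def RSpan (η : ℕ) (δT : ℤ) (δX : ℕ) : Submodule F (MvPolynomial (Fin 4) F) :=
  Submodule.span F (MSet F η δT δX)

/-- The code `C_η(δT,δX)`, image of `R(δT,δX)` under evaluation. -/
noncomputable def Code (η : ℕ) (δT : ℤ) (δX : ℕ) : Submodule F (HIdx F → F) :=
  Submodule.span F (ev F '' MSet F η δT δX)

/-- Hamming weight. -/
noncomputable def wt (v : HIdx F → F) : ℕ := {i | v i ≠ 0}.ncard

/-- Minimum distance of `C_η(δT,δX)`. -/
noncomputable def dmin (η : ℕ) (δT : ℤ) (δX : ℕ) : ℕ :=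
  sInf {w : ℕ | ∃ v ∈ Code F η δT δX, v ≠ 0 ∧ wt F v = w}

/-- `⌊A⌋` where `A = δX` if `δT ≥ 0` and `A = δ/η` otherwise. -/
def Afloor (η : ℕ) (δT : ℤ) (δX : ℕ) : ℤ :=
  if 0 ≤ δT then (δX : ℤ) else (δT + (η : ℤ) * (δX : ℤ)) / (η : ℤ)

/-- Exponent vector of the monomial `M(d2,c2)`. -/
def Mexp (η : ℕ) (δT : ℤ) (δX : ℕ) (d2 c2 : ℕ) : Fin 4 → ℕ :=
  ![(δT + (η : ℤ) * ((δX : ℤ) - (d2 : ℤ)) - (c2 : ℤ)).toNat, c2, δX - d2, d2]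

/-- The monomial `M(d2,c2) = T1^(δT+η(δX-d2)-c2) T2^c2 X1^(δX-d2) X2^d2`. -/
noncomputable def Mmon (η : ℕ) (δT : ℤ) (δX : ℕ) (d2 c2 : ℕ) : MvPolynomial (Fin 4) F :=
  mon F (Mexp η δT δX d2 c2)

/-- The lattice polygon `P(δT,δX)`. -/
def PSet (η : ℕ) (δT : ℤ) (δX : ℕ) : Set (ℕ × ℕ) :=
  {p | (p.1 : ℤ) ≤ Afloor η δT δX ∧ (p.2 : ℤ) ≤ δT + (η : ℤ) * ((δX : ℤ) - (p.1 : ℤ))}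

/-- The set `A_X = {α : α ≤ min(⌊A⌋, q-1)} ∪ ({A} ∩ ℕ)`. -/
def AX (η : ℕ) (δT : ℤ) (δX : ℕ) (q : ℕ) : Set ℕ :=
  {α | (α : ℤ) ≤ min (Afloor η δT δX) ((q : ℤ) - 1)} ∪
    {α | if 0 ≤ δT then (α : ℤ) = (δX : ℤ)
         else (α : ℤ) * (η : ℤ) = δT + (η : ℤ) * (δX : ℤ)}

/-- The set of representatives `K(δT,δX)`. -/
def KSet (η : ℕ) (δT : ℤ) (δX : ℕ) (q : ℕ) : Set (ℕ × ℕ) :=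
  {p | p.1 ∈ AX η δT δX q ∧
    ((p.2 : ℤ) ≤ min (δT + (η : ℤ) * (δX : ℤ) - (η : ℤ) * (p.1 : ℤ)) (q : ℤ) - 1 ∨
      (p.2 : ℤ) = δT + (η : ℤ) * (δX : ℤ) - (η : ℤ) * (p.1 : ℤ))}

/-- Condition (H): `η ≥ 2`, `δT < 0`, `η ∣ δT` and `q ≤ δX + δT/η`. -/
def CondH (η : ℕ) (δT : ℤ) (δX : ℕ) (q : ℕ) : Prop :=
  2 ≤ η ∧ δT < 0 ∧ (η : ℤ) ∣ δT ∧ (q : ℤ) ≤ (δX : ℤ) + δT / (η : ℤ)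

/-- `K*(δT,δX)`: `K(δT,δX)` minus `(δ/η, 0)` if (H) holds. -/
def KStar (η : ℕ) (δT : ℤ) (δX : ℕ) (q : ℕ) : Set (ℕ × ℕ) :=
  if CondH η δT δX q then
    KSet η δT δX q \ {(((δT + (η : ℤ) * (δX : ℤ)) / (η : ℤ)).toNat, 0)}
  else KSet η δT δX q

/-- `Δ*(δT,δX) = {M(α,β) : (α,β) ∈ K*(δT,δX)}`. -/
noncomputable def DeltaStar (η : ℕ) (δT : ℤ) (δX : ℕ) (q : ℕ) :
    Set (MvPolynomial (Fin 4) F) :=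
  {P | ∃ p ∈ KStar η δT δX q, P = Mmon F η δT δX p.1 p.2}


section Aux
set_option linter.unusedSectionVars false
variable {F}


noncomputable def evL : MvPolynomial (Fin 4) F →ₗ[F] (HIdx F → F) where
  toFun P := ev F P
  map_add' P Q := by funext i; simp [ev]
  map_smul' r P := by funext i; simp [ev]

lemma code_mem {η : ℕ} {δT : ℤ} {δX : ℕ} {v : HIdx F → F} :
    v ∈ Code F η δT δX ↔ ∃ P ∈ RSpan F η δT δX, ev F P = v := by
  have h : Code F η δT δX = Submodule.map (evL (F := F)) (RSpan F η δT δX) := by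
    rw [RSpan, Code, Submodule.map_span]
    rfl
  rw [h]
  simp only [Submodule.mem_map]
  rfl

/-- Membership in `RSpan` iff all support exponents have the right bidegree. -/
lemma mem_RSpan_iff {η : ℕ} {δT : ℤ} {δX : ℕ} {P : MvPolynomial (Fin 4) F} :
    P ∈ RSpan F η δT δX ↔ ∀ d ∈ P.support, IsBideg η δT δX (⇑d) := by
  constructor
  · intro hP
    have key : P ∈ ({Q : MvPolynomial (Fin 4) F | ∀ d ∈ Q.support, IsBideg η δT δX (⇑d)} : Set _) := by
      refine Submodule.span_induction ?_ ?_ ?_ ?_ hP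
      · rintro x ⟨c, hc, rfl⟩ d hd
        have hd' : d = Finsupp.equivFunOnFinite.symm c := by
          simpa [mon, MvPolynomial.support_monomial] using hd
        subst hd'
        simpa using hc
      · intro d hd; simp at hd
      · intro x y _ _ hx hy d hd
        rcases Finset.mem_union.1 (MvPolynomial.support_add hd) with h | h
        · exact hx d h
        · exact hy d h
      · intro r x _ hx d hd
        exact hx d (MvPolynomial.support_smul hd)
    exact key
  · intro h
    have hPs : P = ∑ d ∈ P.support, monomial d (coeff d P) := (P.support_sum_monomial_coeff).symm
    rw [hPs]
    refine Submodule.sum_mem _ ?_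
    intro d hd
    have h1 : monomial d (coeff d P) = (coeff d P) • mon F (⇑d) := by
      rw [mon, Finsupp.equivFunOnFinite_symm_coe]
      simp [MvPolynomial.smul_monomial]
    rw [h1]
    exact Submodule.smul_mem _ _ (Submodule.subset_span ⟨(⇑d), h d hd, rfl⟩)

def pointOf : Option F × Option F → HIdx F
  | (some a, some b) => Sum.inl (a, b)
  | (none, some b) => Sum.inr (Sum.inl b)
  | (some a, none) => Sum.inr (Sum.inr (Sum.inl a))
  | (none, none) => Sum.inr (Sum.inr (Sum.inr ()))

noncomputable def fib (v : HIdx F → F) (t : Option F) : ℕ :=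
  (Finset.univ.filter fun b : F => v (pointOf (t, some b)) ≠ 0).card +
    (if v (pointOf (t, none)) ≠ 0 then 1 else 0)

lemma wt_eq_sum_fib (v : HIdx F → F) : wt F v = ∑ t : Option F, fib v t := by
  classical
  have h1 : wt F v = (Finset.univ.filter fun i : HIdx F => v i ≠ 0).card := by
    rw [wt, Set.ncard_eq_toFinset_card']
    congr 1
    simp [Set.toFinset_setOf]
  rw [h1]
  simp only [fib, Finset.card_filter]
  simp only [Finset.card_filter, fib, Fintype.sum_sum_type, Fintype.sum_prod_type,
    Fintype.sum_option, Finset.sum_add_distrib, pointOf]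
  simp only [Finset.univ_unique, Finset.sum_singleton, PUnit.default_eq_unit]
  exact (by intro a b c d; omega : ∀ a b c d : ℕ, a + (b + (c + d)) = b + a + (d + c)) _ _ _ _

def AT (t : Option F) (d : Fin 4 →₀ ℕ) : F :=
  match t with
  | some a => a ^ (d 1)
  | none => (0 : F) ^ (d 0)

noncomputable def qt (P : MvPolynomial (Fin 4) F) (t : Option F) : Polynomial F :=
  ∑ d ∈ P.support, Polynomial.C (coeff d P * AT t d) * Polynomial.X ^ (d 3)

noncomputable def pstar (P : MvPolynomial (Fin 4) F) (dstar : ℕ) : Polynomial F :=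
  ∑ d ∈ P.support.filter (fun d => d 3 = dstar),
    Polynomial.C (coeff d P) * Polynomial.X ^ (d 1)

noncomputable def Cstar (P : MvPolynomial (Fin 4) F) (dstar : ℕ) (t : Option F) : F :=
  ∑ d ∈ P.support.filter (fun d => d 3 = dstar), coeff d P * AT t d

lemma ev_eq (P : MvPolynomial (Fin 4) F) (i : HIdx F) :
    ev F P i = ∑ d ∈ P.support,
      coeff d P * (pt F i 0 ^ d 0 * pt F i 1 ^ d 1 * pt F i 2 ^ d 2 * pt F i 3 ^ d 3) := by
  rw [ev, eval_eq']
  refine Finset.sum_congr rfl fun d _ => ?_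
  rw [Fin.prod_univ_four]

lemma val_some (P : MvPolynomial (Fin 4) F) (t : Option F) (b : F) :
    ev F P (pointOf (t, some b)) = (qt P t).eval b := by
  rw [qt, Polynomial.eval_finset_sum]
  cases t with
  | some a =>
    rw [show pointOf (some a, some b) = Sum.inl (a, b) from rfl, ev_eq]
    refine Finset.sum_congr rfl fun d _ => ?_
    simp [pt, AT, mul_assoc]
  | none =>
    rw [show pointOf ((none : Option F), some b) = Sum.inr (Sum.inl b) from rfl, ev_eq]
    refine Finset.sum_congr rfl fun d _ => ?_
    simp [pt, AT, mul_assoc]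

lemma val_none {η : ℕ} {δT : ℤ} {δX : ℕ} (P : MvPolynomial (Fin 4) F)
    (hP : ∀ d ∈ P.support, IsBideg η δT δX (⇑d)) (t : Option F) :
    ev F P (pointOf (t, none)) = (qt P t).coeff δX := by
  rw [qt, Polynomial.finset_sum_coeff]
  have key : ∀ d ∈ P.support,
      coeff d P * (pt F (pointOf (t, none)) 0 ^ d 0 * pt F (pointOf (t, none)) 1 ^ d 1 *
        pt F (pointOf (t, none)) 2 ^ d 2 * pt F (pointOf (t, none)) 3 ^ d 3)
      = (Polynomial.C (coeff d P * AT t d) * Polynomial.X ^ (d 3)).coeff δX := by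
    intro d hd
    obtain ⟨h1, h2⟩ := hP d hd
    rw [Polynomial.coeff_C_mul, Polynomial.coeff_X_pow]
    by_cases h3 : d 3 = δX
    · have h4 : d 2 = 0 := by omega
      cases t with
      | some a => simp [pt, pointOf, AT, h3, h4, mul_assoc]
      | none => simp [pt, pointOf, AT, h3, h4, mul_assoc]
    · have h4 : d 2 ≠ 0 := by omega
      have h5 : δX ≠ d 3 := by omega
      cases t with
      | some a => simp [pt, pointOf, AT, h3, h4, h5, zero_pow h4]
      | none => simp [pt, pointOf, AT, h3, h4, h5, zero_pow h4]
  rw [ev_eq]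
  exact Finset.sum_congr rfl key

lemma qt_coeff_hi (P : MvPolynomial (Fin 4) F) (t : Option F) (dstar : ℕ)
    (hsup : ∀ d ∈ P.support, d 3 ≤ dstar) {n : ℕ} (hn : dstar < n) :
    (qt P t).coeff n = 0 := by
  rw [qt, Polynomial.finset_sum_coeff]
  refine Finset.sum_eq_zero fun d hd => ?_
  rw [Polynomial.coeff_C_mul, Polynomial.coeff_X_pow]
  have h1 := hsup d hd
  have h2 : n ≠ d 3 := by omega
  simp [h2]

lemma qt_natDegree (P : MvPolynomial (Fin 4) F) (t : Option F) (dstar : ℕ)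
    (hsup : ∀ d ∈ P.support, d 3 ≤ dstar) : (qt P t).natDegree ≤ dstar :=
  Polynomial.natDegree_le_iff_coeff_eq_zero.2 fun _ hn => qt_coeff_hi P t dstar hsup hn

lemma qt_coeff_dstar (P : MvPolynomial (Fin 4) F) (t : Option F) (dstar : ℕ) :
    (qt P t).coeff dstar = Cstar P dstar t := by
  rw [qt, Polynomial.finset_sum_coeff, Cstar]
  rw [Finset.sum_filter]
  refine Finset.sum_congr rfl fun d hd => ?_
  rw [Polynomial.coeff_C_mul, Polynomial.coeff_X_pow]
  by_cases h : d 3 = dstar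
  · simp [h]
  · have h' : dstar ≠ d 3 := Ne.symm h
    simp [h, h']

lemma Cstar_some (P : MvPolynomial (Fin 4) F) (dstar : ℕ) (a : F) :
    Cstar P dstar (some a) = (pstar P dstar).eval a := by
  rw [Cstar, pstar, Polynomial.eval_finset_sum]
  refine Finset.sum_congr rfl fun d hd => ?_
  simp [AT]


lemma pstar_coeff (P : MvPolynomial (Fin 4) F) (dstar n : ℕ) :
    (pstar P dstar).coeff n =
      ∑ d ∈ P.support.filter (fun d => d 3 = dstar),
        (if n = d 1 then coeff d P else 0) := by
  rw [pstar, Polynomial.finset_sum_coeff]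
  refine Finset.sum_congr rfl fun d hd => ?_
  rw [Polynomial.coeff_C_mul, Polynomial.coeff_X_pow]
  by_cases h : n = d 1 <;> simp [h]

lemma sum_T_eq {η : ℕ} {δT : ℤ} {δX : ℕ} {P : MvPolynomial (Fin 4) F}
    (hP : ∀ d ∈ P.support, IsBideg η δT δX (⇑d)) {dstar Dstar : ℕ}
    (hD : (Dstar : ℤ) = δT + (η : ℤ) * (δX : ℤ) - (η : ℤ) * (dstar : ℤ))
    {d : Fin 4 →₀ ℕ} (hd : d ∈ P.support) (h3 : d 3 = dstar) :
    d 0 + d 1 = Dstar := by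
  obtain ⟨a1, a2⟩ := hP d hd
  have hd2 : (d 2 : ℤ) = (δX : ℤ) - (dstar : ℤ) := by
    have : d 2 + d 3 = δX := a2
    omega
  have : (d 0 : ℤ) + (d 1 : ℤ) = (Dstar : ℤ) := by
    linear_combination a1 - hD + (η : ℤ) * hd2
  exact_mod_cast this

lemma Cstar_none {η : ℕ} {δT : ℤ} {δX : ℕ} {P : MvPolynomial (Fin 4) F}
    (hP : ∀ d ∈ P.support, IsBideg η δT δX (⇑d)) {dstar Dstar : ℕ}
    (hD : (Dstar : ℤ) = δT + (η : ℤ) * (δX : ℤ) - (η : ℤ) * (dstar : ℤ)) :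
    Cstar P dstar none = (pstar P dstar).coeff Dstar := by
  rw [Cstar, pstar_coeff]
  refine Finset.sum_congr rfl fun d hd => ?_
  obtain ⟨hdm, h3⟩ := Finset.mem_filter.mp hd
  have h01 : d 0 + d 1 = Dstar := sum_T_eq hP hD hdm h3
  by_cases h0 : d 0 = 0
  · have : Dstar = d 1 := by omega
    simp [AT, h0, this]
  · have : Dstar ≠ d 1 := by omega
    simp [AT, h0, this, zero_pow h0]

lemma pstar_natDegree {η : ℕ} {δT : ℤ} {δX : ℕ} {P : MvPolynomial (Fin 4) F}
    (hP : ∀ d ∈ P.support, IsBideg η δT δX (⇑d)) {dstar Dstar : ℕ}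
    (hD : (Dstar : ℤ) = δT + (η : ℤ) * (δX : ℤ) - (η : ℤ) * (dstar : ℤ)) :
    (pstar P dstar).natDegree ≤ Dstar := by
  refine Polynomial.natDegree_le_iff_coeff_eq_zero.2 fun n hn => ?_
  rw [pstar_coeff]
  refine Finset.sum_eq_zero fun d hd => ?_
  obtain ⟨hdm, h3⟩ := Finset.mem_filter.mp hd
  have h01 : d 0 + d 1 = Dstar := sum_T_eq hP hD hdm h3
  have : n ≠ d 1 := by omega
  simp [this]

lemma bideg_eq {η : ℕ} {δT : ℤ} {δX : ℕ} {d d' : Fin 4 →₀ ℕ}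
    (h : IsBideg η δT δX ⇑d) (h' : IsBideg η δT δX ⇑d')
    (e1 : d 1 = d' 1) (e3 : d 3 = d' 3) : d = d' := by
  obtain ⟨a1, a2⟩ := h
  obtain ⟨b1, b2⟩ := h'
  have e2 : d 2 = d' 2 := by omega
  have c1 : (d 1 : ℤ) = d' 1 := by exact_mod_cast e1
  have c2 : (d 2 : ℤ) = d' 2 := by exact_mod_cast e2
  have e0 : d 0 = d' 0 := by
    have : (d 0 : ℤ) = (d' 0 : ℤ) := by linear_combination a1 - b1 - c1 + (η : ℤ) * c2
    exact_mod_cast this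
  ext a
  fin_cases a
  · exact e0
  · exact e1
  · exact e2
  · exact e3

lemma pstar_ne_zero {η : ℕ} {δT : ℤ} {δX : ℕ} {P : MvPolynomial (Fin 4) F}
    (hP : ∀ d ∈ P.support, IsBideg η δT δX (⇑d)) {dstar : ℕ}
    {d : Fin 4 →₀ ℕ} (hd : d ∈ P.support) (h3 : d 3 = dstar) :
    pstar P dstar ≠ 0 := by
  intro hzero
  have hc : (pstar P dstar).coeff (d 1) = coeff d P := by
    have hsingle := Finset.sum_eq_single_of_mem
      (f := fun d' : Fin 4 →₀ ℕ => if d 1 = d' 1 then coeff d' P else 0)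
      (s := P.support.filter (fun d' => d' 3 = dstar)) d
      (Finset.mem_filter.mpr ⟨hd, h3⟩) (fun d' hd' hne => by
        obtain ⟨hdm', h3'⟩ := Finset.mem_filter.mp hd'
        by_cases he : d 1 = d' 1
        · exact absurd (bideg_eq (hP d' hdm') (hP d hd) he.symm (h3'.trans h3.symm)) hne
        · simp [he])
    rw [pstar_coeff, hsingle]
    simp
  rw [hzero] at hc
  simp at hc
  exact (MvPolynomial.mem_support_iff.mp hd) hc.symm

lemma count_A (p : Polynomial F) (hp : p ≠ 0) :
    Fintype.card F ≤ (Finset.univ.filter fun a : F => p.eval a ≠ 0).card + p.natDegree := by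
  classical
  have hsub : (Finset.univ.filter fun a : F => p.eval a = 0) ⊆ p.roots.toFinset := by
    intro a ha
    rw [Multiset.mem_toFinset]
    exact Polynomial.mem_roots'.mpr ⟨hp, by simpa using (Finset.mem_filter.mp ha).2⟩
  have h1 : (Finset.univ.filter fun a : F => p.eval a = 0).card ≤ p.natDegree :=
    le_trans (Finset.card_le_card hsub)
      (le_trans (Multiset.toFinset_card_le _) (Polynomial.card_roots' p))
  have h2 : (Finset.univ.filter fun a : F => p.eval a ≠ 0).card
      + (Finset.univ.filter fun a : F => p.eval a = 0).card = Fintype.card F := by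
    have h3 := Finset.card_filter_add_card_filter_not
      (s := (Finset.univ : Finset F)) (p := fun a : F => p.eval a = 0)
    rw [Finset.card_univ] at h3
    have h4 : (Finset.univ.filter fun a : F => p.eval a ≠ 0)
        = Finset.univ.filter fun a : F => ¬ p.eval a = 0 := rfl
    rw [h4]
    omega
  omega

lemma count_B (p : Polynomial F) (hp : p ≠ 0) {D : ℕ} (hD : p.natDegree ≤ D) :
    Fintype.card F + 1 ≤ (Finset.univ.filter fun a : F => p.eval a ≠ 0).card + D +
      (if p.coeff D ≠ 0 then 1 else 0) := by
  have hA := count_A p hp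
  by_cases h : p.coeff D ≠ 0
  · rw [if_pos h]
    omega
  · have hne : p.natDegree ≠ D := by
      intro hEq
      apply h
      rw [← hEq, Polynomial.coeff_natDegree]
      exact fun hc => hp (Polynomial.leadingCoeff_eq_zero.mp hc)
    rw [if_neg h]
    omega


set_option maxHeartbeats 2000000 in
lemma lower_bound {η : ℕ} {δT : ℤ} {δX : ℕ} (hη : 2 ≤ η) {δn : ℕ}
    (hδn : (δn : ℤ) = δT + (η : ℤ) * (δX : ℤ)) (hqδ : δn < Fintype.card F)
    {v : HIdx F → F} (hv : v ∈ Code F η δT δX) (hv0 : v ≠ 0) :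
    (Fintype.card F + (if δX = 0 then 1 else 0)) * (Fintype.card F + 1 - δn) ≤ wt F v := by
  classical
  set q := Fintype.card F with hq
  obtain ⟨P, hPR, hPv⟩ := code_mem.mp hv
  subst hPv
  have hP := mem_RSpan_iff.mp hPR
  have hP0 : P ≠ 0 := by rintro rfl; exact hv0 (by funext i; simp [ev])
  have hne : P.support.Nonempty := by
    rw [Finset.nonempty_iff_ne_empty]
    simpa [MvPolynomial.support_eq_empty] using hP0
  set dstar := P.support.sup (fun d => d 3) with hds
  obtain ⟨d, hd, hd3⟩ := Finset.exists_mem_eq_sup _ hne (fun d => d 3)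
  have hd3' : d 3 = dstar := hd3.symm
  have hsup : ∀ d' ∈ P.support, d' 3 ≤ dstar :=
    fun d' hd' => Finset.le_sup (f := fun d => d 3) hd'
  have hdsX : dstar ≤ δX := by
    have h2 := (hP d hd).2
    omega
  have hηds : η * dstar ≤ δn := by
    obtain ⟨a1, a2⟩ := hP d hd
    have ha2 : (d 2 : ℤ) + (d 3 : ℤ) = δX := by exact_mod_cast a2
    have hd3z : (d 3 : ℤ) = dstar := by exact_mod_cast hd3'
    have hkey : (η : ℤ) * dstar + ((d 0 : ℤ) + d 1) = δn := by
      linear_combination a1 + (η:ℤ) * ha2 - (η:ℤ) * hd3z - hδn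
    have h0 : (0:ℤ) ≤ (d 0 : ℤ) + d 1 := by positivity
    have : ((η * dstar : ℕ) : ℤ) ≤ (δn : ℤ) := by push_cast; linarith
    exact_mod_cast this
  have hdq : dstar < q := by
    have h1 : dstar ≤ η * dstar := Nat.le_mul_of_pos_left _ (by omega)
    omega
  set Dstar := δn - η * dstar with hDs
  have hDcast : (Dstar : ℤ) = δT + (η : ℤ) * δX - (η : ℤ) * dstar := by
    rw [hDs, Nat.cast_sub hηds]
    push_cast
    linear_combination hδn
  set G := Finset.univ.filter (fun t : Option F => Cstar P dstar t ≠ 0) with hG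
  have hpne : pstar P dstar ≠ 0 := pstar_ne_zero hP hd hd3'
  have hGcard : q + 1 ≤ G.card + Dstar := by
    have hcb := count_B (pstar P dstar) hpne (pstar_natDegree hP hDcast)
    have hGsplit : G.card = (if (pstar P dstar).coeff Dstar ≠ 0 then 1 else 0)
        + (Finset.univ.filter fun a : F => (pstar P dstar).eval a ≠ 0).card := by
      rw [hG, Finset.card_filter, Fintype.sum_option]
      congr 1
      · rw [Cstar_none hP hDcast]
      · rw [Finset.card_filter]
        exact Finset.sum_congr rfl fun a _ => by rw [Cstar_some]
    rw [hGsplit]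
    by_cases hc : (pstar P dstar).coeff Dstar ≠ 0
    · rw [if_pos hc] at hcb ⊢; omega
    · rw [if_neg hc] at hcb ⊢; omega
  have hfib : ∀ t ∈ G, q + (if dstar = δX then 1 else 0) ≤ fib (ev F P) t + dstar := by
    intro t ht
    have hCt : Cstar P dstar t ≠ 0 := (Finset.mem_filter.mp ht).2
    have hqt0 : qt P t ≠ 0 := fun h => hCt (by rw [← qt_coeff_dstar, h, Polynomial.coeff_zero])
    have hdeg : (qt P t).natDegree ≤ dstar := qt_natDegree P t dstar hsup
    have hfilter : (Finset.univ.filter fun b : F => ev F P (pointOf (t, some b)) ≠ 0)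
        = Finset.univ.filter fun b : F => (qt P t).eval b ≠ 0 := by
      apply Finset.filter_congr
      intro b _
      rw [val_some]
    have hvnone : ev F P (pointOf (t, none)) = (qt P t).coeff δX := val_none P hP t
    rw [fib, hfilter, hvnone]
    by_cases hcase : dstar = δX
    · rw [if_pos hcase, ← hcase]
      have hcb := count_B (qt P t) hqt0 hdeg
      by_cases hc : (qt P t).coeff dstar ≠ 0
      · rw [if_pos hc] at hcb ⊢; omega
      · rw [if_neg hc] at hcb ⊢; omega
    · rw [if_neg hcase]
      have hlt : dstar < δX := lt_of_le_of_ne hdsX hcase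
      have hcz : (qt P t).coeff δX = 0 := qt_coeff_hi P t dstar hsup hlt
      have hca := count_A (qt P t) hqt0
      rw [hcz, if_neg (by simp)]
      omega
  have htot : G.card * (q + (if dstar = δX then 1 else 0) - dstar) ≤ wt F (ev F P) := by
    rw [wt_eq_sum_fib]
    calc G.card * (q + (if dstar = δX then 1 else 0) - dstar)
        = ∑ _t ∈ G, (q + (if dstar = δX then 1 else 0) - dstar) := by
          rw [Finset.sum_const, smul_eq_mul]
      _ ≤ ∑ t ∈ G, fib (ev F P) t :=
          Finset.sum_le_sum fun t ht => Nat.sub_le_iff_le_add.mpr (hfib t ht)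
      _ ≤ ∑ t : Option F, fib (ev F P) t :=
          Finset.sum_le_sum_of_subset (Finset.subset_univ G)
  refine le_trans ?_ htot
  -- now the pure arithmetic
  by_cases hX0 : δX = 0
  · have hds0 : dstar = 0 := by omega
    have hD0 : Dstar = δn := by rw [hDs, hds0, Nat.mul_zero, Nat.sub_zero]
    rw [if_pos hX0, if_pos (by omega : dstar = δX), hds0, Nat.sub_zero]
    have hg : q + 1 - δn ≤ G.card := by omega
    calc (q + 1) * (q + 1 - δn) = (q + 1 - δn) * (q + 1) := by ring
      _ ≤ G.card * (q + 1) := Nat.mul_le_mul_right _ hg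
  · rw [if_neg hX0]
    have hg : ((G.card : ℤ)) ≥ (q : ℤ) + 1 - δn + η * dstar := by
      have : ((Dstar : ℤ)) = (δn : ℤ) - η * dstar := by
        rw [hDcast]; linear_combination -hδn
      have h2 : ((q : ℤ)) + 1 ≤ (G.card : ℤ) + Dstar := by exact_mod_cast hGcard
      linarith
    by_cases hcase : dstar = δX
    · -- dstar = δX ≥ 1
      rw [if_pos hcase]
      have hd1 : 1 ≤ dstar := by omega
      have hmc : ((q + 1 - dstar : ℕ) : ℤ) = (q : ℤ) + 1 - dstar := by
        rw [Nat.cast_sub (by omega)]; push_cast; ring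
      have goalZ : ((q : ℤ)) * ((q : ℤ) + 1 - δn) ≤ (G.card : ℤ) * ((q : ℤ) + 1 - dstar) := by
        have hm0 : (0:ℤ) ≤ (q : ℤ) + 1 - dstar := by
          have : (dstar : ℤ) < q := by exact_mod_cast hdq
          linarith
        have hstep : ((q : ℤ) + 1 - δn + η * dstar) * ((q : ℤ) + 1 - dstar)
            ≤ (G.card : ℤ) * ((q : ℤ) + 1 - dstar) :=
          mul_le_mul_of_nonneg_right hg hm0
        refine le_trans ?_ hstep
        have e1 : (2:ℤ) ≤ η := by exact_mod_cast hη
        have e2 : ((η:ℤ)) * dstar ≤ δn := by exact_mod_cast hηds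
        have e3 : ((δn:ℤ)) < q := by exact_mod_cast hqδ
        have e4 : (1:ℤ) ≤ dstar := by exact_mod_cast hd1
        have hBnn : (0:ℤ) ≤ (dstar:ℤ) := by positivity
        have k1 : (0:ℤ) ≤ ((η:ℤ) - 2) * ((q:ℤ) + 1 - dstar) := mul_nonneg (by linarith) hm0
        have key : (0:ℤ) ≤ (η:ℤ) * ((q:ℤ) + 1 - dstar) - ((q:ℤ) + 1 - δn) := by nlinarith
        have hprod := mul_nonneg hBnn key
        nlinarith [hprod]
      simp only [Nat.add_zero]
      zify [show δn ≤ q + 1 by omega, show dstar ≤ q + 1 by omega]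
      linarith [goalZ]
    · rw [if_neg hcase]
      have goalZ : ((q : ℤ)) * ((q : ℤ) + 1 - δn) ≤ (G.card : ℤ) * ((q : ℤ) - dstar) := by
        have hm0 : (0:ℤ) ≤ (q : ℤ) - dstar := by
          have : (dstar : ℤ) < q := by exact_mod_cast hdq
          linarith
        have hstep : ((q : ℤ) + 1 - δn + η * dstar) * ((q : ℤ) - dstar)
            ≤ (G.card : ℤ) * ((q : ℤ) - dstar) :=
          mul_le_mul_of_nonneg_right hg hm0
        refine le_trans ?_ hstep
        have e1 : (2:ℤ) ≤ η := by exact_mod_cast hη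
        have e2 : ((η:ℤ)) * dstar ≤ δn := by exact_mod_cast hηds
        have e3 : ((δn:ℤ)) < q := by exact_mod_cast hqδ
        have e4 : (0:ℤ) ≤ dstar := by positivity
        have k1 : (0:ℤ) ≤ ((η:ℤ) - 2) * ((q:ℤ) - dstar) := mul_nonneg (by linarith) hm0
        have key : (0:ℤ) ≤ (η:ℤ) * ((q:ℤ) - dstar) - ((q:ℤ) + 1 - δn) := by nlinarith
        have hprod := mul_nonneg e4 key
        nlinarith [hprod]
      simp only [Nat.add_zero]
      zify [show δn ≤ q + 1 by omega, show dstar ≤ q by omega]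
      linarith [goalZ]


lemma ev_mon (c : Fin 4 → ℕ) (i : HIdx F) :
    ev F (mon F c) i = pt F i 0 ^ c 0 * pt F i 1 ^ c 1 * pt F i 2 ^ c 2 * pt F i 3 ^ c 3 := by
  rw [ev, mon, eval_monomial]
  rw [Finsupp.prod_fintype]
  · rw [Fin.prod_univ_four]
    simp
  · intro j
    exact pow_zero _

lemma wt_eq_four (v : HIdx F → F) :
    wt F v = (Finset.univ.filter fun ab : F × F => v (Sum.inl ab) ≠ 0).card
      + (Finset.univ.filter fun b : F => v (Sum.inr (Sum.inl b)) ≠ 0).card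
      + (Finset.univ.filter fun a : F => v (Sum.inr (Sum.inr (Sum.inl a))) ≠ 0).card
      + (if v (Sum.inr (Sum.inr (Sum.inr ()))) ≠ 0 then 1 else 0) := by
  classical
  have h1 : wt F v = (Finset.univ.filter fun i : HIdx F => v i ≠ 0).card := by
    rw [wt, Set.ncard_eq_toFinset_card']
    congr 1
    simp [Set.toFinset_setOf]
  rw [h1]
  simp only [Finset.card_filter, Fintype.sum_sum_type]
  simp only [Finset.univ_unique, Finset.sum_singleton, PUnit.default_eq_unit]
  ring

set_option maxHeartbeats 1000000 in
lemma upper_bound {η : ℕ} {δT : ℤ} (δX : ℕ) (hη : 2 ≤ η) {δn : ℕ}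
    (hδn : (δn : ℤ) = δT + (η : ℤ) * (δX : ℤ)) (hqδ : δn < Fintype.card F) :
    ∃ v ∈ Code F η δT δX, v ≠ 0 ∧
      wt F v = (Fintype.card F + (if δX = 0 then 1 else 0)) * (Fintype.card F + 1 - δn) := by
  classical
  set q := Fintype.card F with hq
  obtain ⟨E, -, hEcard⟩ := Finset.exists_subset_card_eq (s := (Finset.univ : Finset F)) (n := δn)
    (by rw [Finset.card_univ]; omega)
  set p0 : Polynomial F := ∏ e ∈ E, (Polynomial.X - Polynomial.C e) with hp0
  have hmonic : p0.Monic := Polynomial.monic_prod_of_monic _ _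
    (fun e _ => Polynomial.monic_X_sub_C e)
  have hp0ne : p0 ≠ 0 := hmonic.ne_zero
  have hdeg : p0.natDegree = δn := by
    rw [hp0, Polynomial.natDegree_prod _ _ (fun e _ => Polynomial.X_sub_C_ne_zero e)]
    simp [hEcard]
  have hlead : p0.coeff δn = 1 := by
    rw [← hdeg]
    exact hmonic.coeff_natDegree
  have hevalz : ∀ a : F, (p0.eval a = 0 ↔ a ∈ E) := by
    intro a
    rw [hp0, Polynomial.eval_prod]
    rw [Finset.prod_eq_zero_iff]
    constructor
    · rintro ⟨e, he, hz⟩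
      simp only [Polynomial.eval_sub, Polynomial.eval_X, Polynomial.eval_C, sub_eq_zero] at hz
      rwa [hz]
    · intro ha
      exact ⟨a, ha, by simp⟩
  set P0 : MvPolynomial (Fin 4) F :=
    ∑ k ∈ Finset.range (δn + 1), (p0.coeff k) • mon F ![δn - k, k, δX, 0] with hP0def
  have hP0mem : P0 ∈ RSpan F η δT δX := by
    rw [hP0def]
    refine Submodule.sum_mem _ fun k hk => Submodule.smul_mem _ _ (Submodule.subset_span ?_)
    have hk' : k ≤ δn := by
      rw [Finset.mem_range] at hk; omega
    refine ⟨![δn - k, k, δX, 0], ⟨?_, ?_⟩, rfl⟩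
    · show ((δn - k : ℕ) : ℤ) + (k : ℤ) - (η : ℤ) * (δX : ℤ) = δT
      rw [Nat.cast_sub hk']
      linear_combination hδn
    · show δX + 0 = δX
      omega
  have hev : ∀ i, ev F P0 i = ∑ k ∈ Finset.range (δn + 1),
      p0.coeff k * (pt F i 0 ^ (δn - k) * pt F i 1 ^ k * pt F i 2 ^ δX) := by
    intro i
    show eval (pt F i) P0 = _
    rw [hP0def, map_sum]
    refine Finset.sum_congr rfl fun k _ => ?_
    rw [MvPolynomial.smul_eq_C_mul, map_mul, eval_C]
    have h := ev_mon (F := F) ![δn - k, k, δX, 0] i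
    rw [show ev F (mon F ![δn - k, k, δX, 0]) i
        = eval (pt F i) (mon F ![δn - k, k, δX, 0]) from rfl] at h
    rw [h]
    norm_num [Matrix.cons_val_two, Matrix.cons_val_three]
  have hv1 : ∀ a b : F, ev F P0 (Sum.inl (a, b)) = p0.eval a := by
    intro a b
    rw [hev, Polynomial.eval_eq_sum_range' (by omega : p0.natDegree < δn + 1)]
    refine Finset.sum_congr rfl fun k _ => ?_
    simp [pt]
  have hsum0 : ∑ k ∈ Finset.range (δn + 1), p0.coeff k * (0:F) ^ (δn - k) = 1 := by
    rw [Finset.sum_eq_single δn]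
    · simp [hlead]
    · intro k hk hkne
      rw [Finset.mem_range] at hk
      have : δn - k ≠ 0 := by omega
      simp [zero_pow this]
    · intro h
      simp at h
  have hv2 : ∀ b : F, ev F P0 (Sum.inr (Sum.inl b)) = 1 := by
    intro b
    rw [hev]
    rw [show (∑ k ∈ Finset.range (δn + 1), p0.coeff k *
        (pt F (Sum.inr (Sum.inl b)) 0 ^ (δn - k) * pt F (Sum.inr (Sum.inl b)) 1 ^ k *
          pt F (Sum.inr (Sum.inl b)) 2 ^ δX))
        = ∑ k ∈ Finset.range (δn + 1), p0.coeff k * (0:F) ^ (δn - k) from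
      Finset.sum_congr rfl fun k _ => by simp [pt]]
    exact hsum0
  have hv3 : ∀ a : F, ev F P0 (Sum.inr (Sum.inr (Sum.inl a)))
      = if δX = 0 then p0.eval a else 0 := by
    intro a
    rw [hev]
    by_cases hX : δX = 0
    · rw [if_pos hX]
      rw [Polynomial.eval_eq_sum_range' (by omega : p0.natDegree < δn + 1)]
      refine Finset.sum_congr rfl fun k _ => ?_
      simp [pt, hX]
    · rw [if_neg hX]
      refine Finset.sum_eq_zero fun k _ => ?_
      simp [pt, zero_pow hX]
  have hv4 : ev F P0 (Sum.inr (Sum.inr (Sum.inr ()))) = if δX = 0 then 1 else 0 := by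
    rw [hev]
    by_cases hX : δX = 0
    · rw [if_pos hX]
      rw [show (∑ k ∈ Finset.range (δn + 1), p0.coeff k *
          (pt F (Sum.inr (Sum.inr (Sum.inr ()))) 0 ^ (δn - k) *
            pt F (Sum.inr (Sum.inr (Sum.inr ()))) 1 ^ k *
            pt F (Sum.inr (Sum.inr (Sum.inr ()))) 2 ^ δX))
          = ∑ k ∈ Finset.range (δn + 1), p0.coeff k * (0:F) ^ (δn - k) from
        Finset.sum_congr rfl fun k _ => by simp [pt, hX]]
      exact hsum0
    · rw [if_neg hX]
      refine Finset.sum_eq_zero fun k _ => ?_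
      simp [pt, zero_pow hX]
  refine ⟨ev F P0, code_mem.mpr ⟨P0, hP0mem, rfl⟩, ?_, ?_⟩
  · intro hzero
    have h := congrFun hzero (Sum.inr (Sum.inl (0:F)))
    rw [hv2 0] at h
    simp at h
  · -- weight computation
    have hA : (Finset.univ.filter fun a : F => p0.eval a ≠ 0).card = q - δn := by
      have hfz : (Finset.univ.filter fun a : F => p0.eval a = 0) = E := by
        ext a
        simp [hevalz a]
      have hadd := Finset.card_filter_add_card_filter_not
        (s := (Finset.univ : Finset F)) (p := fun a : F => p0.eval a = 0)
      rw [Finset.card_univ, hfz, hEcard] at hadd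
      have hrfl : (Finset.univ.filter fun a : F => p0.eval a ≠ 0)
          = Finset.univ.filter fun a : F => ¬ p0.eval a = 0 := rfl
      rw [hrfl]
      omega
    rw [wt_eq_four]
    have hc1 : (Finset.univ.filter fun ab : F × F => ev F P0 (Sum.inl ab) ≠ 0).card
        = (q - δn) * q := by
      rw [Finset.card_filter, Fintype.sum_prod_type]
      have hstep : ∀ a : F, (∑ _b : F, if ev F P0 (Sum.inl (a, _b)) ≠ 0 then 1 else 0)
          = (if p0.eval a ≠ 0 then 1 else 0) * q := by
        intro a
        rw [show (∑ _b : F, if ev F P0 (Sum.inl (a, _b)) ≠ 0 then 1 else 0)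
            = ∑ _b : F, (if p0.eval a ≠ 0 then 1 else 0) from
          Finset.sum_congr rfl fun b _ => by rw [hv1 a b]]
        rw [Finset.sum_const, smul_eq_mul, mul_comm, Finset.card_univ]
      rw [Finset.sum_congr rfl fun a _ => hstep a, ← Finset.sum_mul, ← Finset.card_filter, hA]
    have hc2 : (Finset.univ.filter fun b : F => ev F P0 (Sum.inr (Sum.inl b)) ≠ 0).card = q := by
      rw [show (Finset.univ.filter fun b : F => ev F P0 (Sum.inr (Sum.inl b)) ≠ 0)
          = Finset.univ from Finset.filter_true_of_mem fun b _ => by rw [hv2 b]; simp]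
      exact Finset.card_univ
    have hc3 : (Finset.univ.filter fun a : F => ev F P0 (Sum.inr (Sum.inr (Sum.inl a))) ≠ 0).card
        = if δX = 0 then q - δn else 0 := by
      by_cases hX : δX = 0
      · rw [if_pos hX, ← hA]
        congr 1
        apply Finset.filter_congr
        intro a _
        rw [hv3 a, if_pos hX]
      · rw [if_neg hX]
        rw [Finset.card_eq_zero, Finset.filter_eq_empty_iff]
        intro a _
        rw [hv3 a, if_neg hX]
        simp
    rw [hc1, hc2, hc3, hv4]
    by_cases hX : δX = 0
    · rw [if_pos hX, if_pos hX, if_pos hX, if_pos (by simp : (1:F) ≠ 0)]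
      have h1 : q - δn + 1 = q + 1 - δn := by omega
      calc (q - δn) * q + q + (q - δn) + 1 = (q + 1) * ((q - δn) + 1) := by ring
        _ = (q + 1) * (q + 1 - δn) := by rw [h1]
    · rw [if_neg hX, if_neg hX, if_neg hX, if_neg (by simp : ¬ (0:F) ≠ 0)]
      have h1 : q - δn + 1 = q + 1 - δn := by omega
      calc (q - δn) * q + q + 0 + 0 = q * ((q - δn) + 1) := by ring
        _ = (q + 0) * (q + 1 - δn) := by rw [h1]; ring


end Aux

/-- for `η ≥ 2` and `q > δ`, `d_η(δT,δX) = (q + [δX = 0])·(q−δ+1)`. -/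
theorem statement15 (η : ℕ) (δT : ℤ) (δX : ℕ) (hη : 2 ≤ η)
    (hδ : 0 ≤ δT + (η : ℤ) * (δX : ℤ))
    (hq : δT + (η : ℤ) * (δX : ℤ) < (Fintype.card F : ℤ)) :
    (dmin F η δT δX : ℤ) =
      ((Fintype.card F : ℤ) + (if δX = 0 then 1 else 0)) *
        ((Fintype.card F : ℤ) - (δT + (η : ℤ) * (δX : ℤ)) + 1) := by
  classical
  set q := Fintype.card F with hqdef
  set δn := (δT + (η : ℤ) * (δX : ℤ)).toNat with hδndef
  have hδn : (δn : ℤ) = δT + (η : ℤ) * (δX : ℤ) := Int.toNat_of_nonneg hδ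
  have hqδ : δn < q := by
    have h2 : (δn : ℤ) < (q : ℤ) := by rw [hδn]; exact hq
    exact_mod_cast h2
  obtain ⟨v, hv, hv0, hwt⟩ := upper_bound δX hη hδn hqδ
  set N := (q + (if δX = 0 then 1 else 0)) * (q + 1 - δn) with hN
  have hmem : N ∈ {w : ℕ | ∃ u ∈ Code F η δT δX, u ≠ 0 ∧ wt F u = w} := ⟨v, hv, hv0, hwt⟩
  have hle : dmin F η δT δX ≤ N := Nat.sInf_le hmem
  have hge : N ≤ dmin F η δT δX := by
    refine le_csInf ⟨N, hmem⟩ ?_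
    rintro w ⟨u, hu, hu0, rfl⟩
    exact lower_bound hη hδn hqδ hu hu0
  have hdm : dmin F η δT δX = N := le_antisymm hle hge
  rw [hdm, hN]
  rw [Nat.cast_mul, Nat.cast_sub (by omega : δn ≤ q + 1)]
  push_cast
  rw [hδn]
  by_cases hX : δX = 0
  · rw [if_pos hX]
    ring
  · rw [if_neg hX]
    ring

end Hirz
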